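/- Let A ⊆ Δ^n be Lebesgue measurable and permutation invariant. Let Z be an integrable real random variable with finite essential supremum, let Z_1,…,Z_{n−1} be iid with the same law as Z, and set Z_n := esssup Z. Let U_1,…,U_{n−1} be iid uniform on [0,1] with order statistics U_(1) ≤ ⋯ ≤ U_(n−1), set U_(0) := 0 and U_(n) := 1, and let ν be the spacings vector ν_i = U_(i) − U_(i−1). Then P[ sup_{μ ∈ A} ∑_{i=1}^n μ_i Z_i ≥ E[Z] ] ≥ P[ ν ∈ A + K^n ]. -/

import Mathlib

open MeasureTheory ProbabilityTheory Pointwise Set Filter Topology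

/-- The majorization cone `K^n`. -/
def majorCone (n : ℕ) : Set (Fin n → ℝ) :=
  {x | (∀ k : ℕ, k < n →
          0 ≤ ∑ i ∈ Finset.univ.filter (fun i : Fin n => (i : ℕ) < k), x i) ∧
        ∑ i, x i = 0}

/-- Increasing rearrangement (order statistics) of a finite tuple. -/
noncomputable def sortedVec {α : Type*} [LinearOrder α] {n : ℕ} (z : Fin n → α) : Fin n → α :=
  z ∘ Tuple.sort z

/-- The full sample vector `(Z_1, …, Z_{n-1}, M)`. -/
def fullVec {Ω : Type*} {n : ℕ} (Zs : Fin (n - 1) → Ω → ℝ) (M : ℝ) (i : Fin n) (ω : Ω) : ℝ :=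
  if h : (i : ℕ) < n - 1 then Zs ⟨(i : ℕ), h⟩ ω else M

/-- The augmented uniform order statistics `U_(k)`, `k ∈ [n]`, with the convention `U_(n) := 1`. -/
noncomputable def augOrder {n : ℕ} (U : Fin (n - 1) → ℝ) (k : Fin n) : ℝ :=
  if h : (k : ℕ) + 1 < n then sortedVec U ⟨(k : ℕ), by omega⟩ else 1

/-- The spacings vector `ν_i = U_(i) - U_(i-1)`, `i ∈ [n]`, with `U_(0) := 0`, `U_(n) := 1`. -/
noncomputable def spacings {n : ℕ} (U : Fin (n - 1) → ℝ) (i : Fin n) : ℝ :=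
  augOrder U i -
    (if h : 0 < (i : ℕ) then augOrder U ⟨(i : ℕ) - 1, by have := i.isLt; omega⟩ else 0)



section QF
variable (μ : Measure ℝ) [IsProbabilityMeasure μ] {M : ℝ}

noncomputable def qf (u : ℝ) : ℝ :=
  if 0 < u ∧ u ≤ 1 then sInf {x | u ≤ cdf μ x} else 0

lemma qf_bddBelow {u : ℝ} (hu : 0 < u) : BddBelow {x | u ≤ cdf μ x} := by
  obtain ⟨x₀, hx₀⟩ := eventually_atBot.mp ((tendsto_cdf_atBot (μ := μ)).eventually_lt_const hu)
  refine ⟨x₀, fun y hy => ?_⟩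
  by_contra h
  exact absurd hy (not_le.mpr (hx₀ y (le_of_not_ge h)))

lemma qf_set_nonempty {u : ℝ} (hu1 : u ≤ 1) (hM : cdf μ M = 1) :
    {x | u ≤ cdf μ x}.Nonempty := ⟨M, by simp [hM, hu1]⟩

lemma le_cdf_sInf {u : ℝ} (hu0 : 0 < u) (hu1 : u ≤ 1) (hM : cdf μ M = 1) :
    u ≤ cdf μ (sInf {x | u ≤ cdf μ x}) := by
  set S := {x | u ≤ cdf μ x} with hS
  have hne : S.Nonempty := qf_set_nonempty μ hu1 hM
  have hbd : BddBelow S := qf_bddBelow μ hu0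
  have hsub : S ⊆ Ici (sInf S) := fun x hx => csInf_le hbd hx
  have hcl : sInf S ∈ closure S := csInf_mem_closure hne hbd
  haveI : (𝓝[S] (sInf S)).NeBot := mem_closure_iff_nhdsWithin_neBot.mp hcl
  have hc : ContinuousWithinAt (cdf μ) S (sInf S) :=
    ((cdf μ).right_continuous _).mono hsub
  exact ge_of_tendsto hc (eventually_nhdsWithin_of_forall (fun x hx => hx))

lemma qf_le_iff {u x : ℝ} (hu0 : 0 < u) (hu1 : u ≤ 1) (hM : cdf μ M = 1) :
    qf μ u ≤ x ↔ u ≤ cdf μ x := by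
  rw [qf, if_pos ⟨hu0, hu1⟩]
  constructor
  · intro h
    exact (le_cdf_sInf μ hu0 hu1 hM).trans (monotone_cdf μ h)
  · intro h
    exact csInf_le (qf_bddBelow μ hu0) h

lemma qf_monotoneOn (hM : cdf μ M = 1) : MonotoneOn (qf μ) (Ioc 0 1) := by
  intro u hu v hv huv
  rw [qf_le_iff μ hu.1 hu.2 hM]
  exact huv.trans ((qf_le_iff μ hv.1 hv.2 hM).mp le_rfl)

lemma qf_le_M (hM : cdf μ M = 1) {u : ℝ} (hu : u ∈ Ioc (0:ℝ) 1) : qf μ u ≤ M :=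
  (qf_le_iff μ hu.1 hu.2 hM).mpr (by rw [hM]; exact hu.2)

lemma qf_measurable (hM : cdf μ M = 1) : Measurable (qf μ) := by
  apply measurable_of_Iic
  intro x
  have h : qf μ ⁻¹' Iic x =
      (Ioc 0 1 ∩ Iic (cdf μ x)) ∪ ((Ioc (0:ℝ) 1)ᶜ ∩ (if 0 ≤ x then univ else ∅)) := by
    ext u
    by_cases hu : u ∈ Ioc (0:ℝ) 1
    · simp only [mem_preimage, mem_Iic, mem_union, mem_inter_iff, hu, true_and, mem_compl_iff,
        not_true, false_and, or_false]
      exact qf_le_iff μ hu.1 hu.2 hM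
    · have : qf μ u = 0 := by
        rw [qf, if_neg]; rw [mem_Ioc] at hu; exact fun h => hu ⟨h.1, h.2⟩
      simp only [mem_preimage, mem_Iic, this, mem_union, mem_inter_iff, hu, false_and,
        mem_compl_iff, not_false_iff, true_and, false_or]
      by_cases hx : 0 ≤ x <;> simp [hx]
  rw [h]
  apply MeasurableSet.union
  · exact measurableSet_Ioc.inter measurableSet_Iic
  · exact measurableSet_Ioc.compl.inter (by split <;> simp)

lemma qf_map (hM : cdf μ M = 1) :
    Measure.map (qf μ) (volume.restrict (Icc 0 1)) = μ := by
  have hmeas := qf_measurable μ hM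
  haveI : IsProbabilityMeasure (volume.restrict (Icc (0:ℝ) 1)) :=
    ⟨by rw [Measure.restrict_apply_univ, Real.volume_Icc]; norm_num⟩
  haveI : IsProbabilityMeasure (Measure.map (qf μ) (volume.restrict (Icc (0:ℝ) 1))) :=
    Measure.isProbabilityMeasure_map hmeas.aemeasurable
  refine Measure.ext_of_Iic _ _ (fun x => ?_)
  rw [Measure.map_apply hmeas measurableSet_Iic,
    Measure.restrict_apply (hmeas measurableSet_Iic)]
  have hF1 : cdf μ x ≤ 1 := cdf_le_one μ x
  have hF0 : 0 ≤ cdf μ x := cdf_nonneg μ x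
  have hsub1 : Ioc 0 (cdf μ x) ⊆ qf μ ⁻¹' Iic x ∩ Icc 0 1 := by
    intro u hu
    refine ⟨?_, ⟨le_of_lt hu.1, hu.2.trans hF1⟩⟩
    exact mem_Iic.mpr ((qf_le_iff μ hu.1 (hu.2.trans hF1) hM).mpr hu.2)
  have hsub2 : qf μ ⁻¹' Iic x ∩ Icc 0 1 ⊆ Ioc 0 (cdf μ x) ∪ {0} := by
    rintro u ⟨hqu, hu0, hu1⟩
    rcases eq_or_lt_of_le hu0 with h | h
    · exact Or.inr (by simp [← h])
    · exact Or.inl ⟨h, (qf_le_iff μ h hu1 hM).mp hqu⟩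
  have hvol : volume (qf μ ⁻¹' Iic x ∩ Icc 0 1) = ENNReal.ofReal (cdf μ x) := by
    refine le_antisymm ?_ ?_
    · calc volume (qf μ ⁻¹' Iic x ∩ Icc 0 1) ≤ volume (Ioc 0 (cdf μ x) ∪ {0}) :=
            measure_mono hsub2
        _ ≤ volume (Ioc 0 (cdf μ x)) + volume ({0} : Set ℝ) := measure_union_le _ _
        _ = ENNReal.ofReal (cdf μ x) := by simp [Real.volume_Ioc]
    · calc ENNReal.ofReal (cdf μ x) = volume (Ioc 0 (cdf μ x)) := by simp [Real.volume_Ioc]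
        _ ≤ _ := measure_mono hsub1
  rw [hvol, ofReal_cdf]

end QF

def fvv {n : ℕ} (M : ℝ) (z : Fin (n - 1) → ℝ) (i : Fin n) : ℝ :=
  if h : (i : ℕ) < n - 1 then z ⟨(i : ℕ), h⟩ else M

lemma Ioc_subset_iUnion_chain (b : ℕ → ℝ) :
    ∀ n : ℕ, Ioc (b 0) (b n) ⊆ ⋃ j : Fin n, Ioc (b j) (b ((j : ℕ) + 1)) := by
  intro n
  induction n with
  | zero => simp
  | succ m ih =>
    intro x hx
    by_cases h : b m < x
    · exact mem_iUnion.mpr ⟨⟨m, Nat.lt_succ_self m⟩, ⟨h, hx.2⟩⟩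
    · obtain ⟨j, hj⟩ := mem_iUnion.mp (ih ⟨hx.1, not_lt.mp h⟩)
      exact mem_iUnion.mpr ⟨⟨(j : ℕ), (j.isLt).trans (Nat.lt_succ_self m)⟩, hj⟩

lemma filter_sum_eq {n : ℕ} (x : Fin n → ℝ) {m : ℕ} (hm : m ≤ n) :
    ∑ i ∈ Finset.univ.filter (fun i : Fin n => (i : ℕ) < m), x i
      = ∑ j ∈ Finset.range m, (fun j => if h : j < n then x ⟨j, h⟩ else 0) j := by
  rw [Finset.sum_filter]
  have h1 : ∀ a : Fin n, (if (a:ℕ) < m then x a else 0)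
      = (fun j => if j < m then (if h : j < n then x ⟨j, h⟩ else 0) else 0) (a : ℕ) := by
    intro a
    simp only [dif_pos a.isLt, Fin.eta]
  rw [Finset.sum_congr rfl (fun a _ => h1 a),
    Fin.sum_univ_eq_sum_range (fun j => if j < m then (if h : j < n then x ⟨j, h⟩ else 0) else 0)]
  rw [← Finset.sum_filter]
  congr 1
  ext j
  simp only [Finset.mem_filter, Finset.mem_range]
  omega

lemma det_key {n : ℕ} (hn : 1 ≤ n) (A : Set (Fin n → ℝ))
    (hAsub : A ⊆ stdSimplex ℝ (Fin n))
    (hAperm : ∀ π : Equiv.Perm (Fin n), ∀ μ ∈ A, (fun i => μ (π i)) ∈ A)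
    (g : ℝ → ℝ) (M : ℝ) (hg_mono : MonotoneOn g (Set.Ioc 0 1))
    (hgM : ∀ x ∈ Set.Ioc (0:ℝ) 1, g x ≤ M)
    (hg_int : IntegrableOn g (Set.Icc 0 1) volume)
    (u : Fin (n-1) → ℝ) (hu : ∀ i, u i ∈ Set.Ioc (0:ℝ) 1)
    (hmem : spacings u ∈ A + majorCone n) :
    (∫ x in Set.Icc (0:ℝ) 1, g x) ≤
      sSup ((fun μ => ∑ i, μ i * fvv M (fun j => g (u j)) i) '' A) := by
  obtain ⟨μA, hμA, k, hk, hsum⟩ := Set.mem_add.mp hmem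
  -- the augmented order statistics and partition points
  set a : Fin n → ℝ := augOrder u with ha_def
  have ha_mem : ∀ j, a j ∈ Ioc (0:ℝ) 1 := by
    intro j
    rw [ha_def, augOrder]
    split
    · exact hu _
    · exact ⟨zero_lt_one, le_rfl⟩
  have ha_eq1 : ∀ j : Fin n, ¬ ((j:ℕ) + 1 < n) → a j = 1 := by
    intro j h
    simp only [ha_def, augOrder, dif_neg h]
  have ha_eq2 : ∀ (j : Fin n) (h : (j:ℕ) + 1 < n),
      a j = sortedVec u ⟨(j:ℕ), by omega⟩ := by
    intro j h
    simp only [ha_def, augOrder, dif_pos h]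
  have ha_mono : ∀ {j j' : Fin n}, j ≤ j' → a j ≤ a j' := by
    intro j j' hjj
    have hv : (j : ℕ) ≤ (j' : ℕ) := hjj
    by_cases h2 : (j' : ℕ) + 1 < n
    · have h1 : (j : ℕ) + 1 < n := by omega
      rw [ha_eq2 j h1, ha_eq2 j' h2]
      exact Tuple.monotone_sort u (show ((⟨(j:ℕ), by omega⟩ : Fin (n-1))) ≤ ⟨(j':ℕ), by omega⟩ from hv)
    · rw [ha_eq1 j' h2]
      exact (ha_mem j).2
  -- the ℕ-indexed partition points
  set b : ℕ → ℝ := fun m => if m = 0 then 0 else if h : m - 1 < n then a ⟨m - 1, h⟩ else 1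
    with hb_def
  have hb0 : b 0 = 0 := by simp [hb_def]
  have hbn : b n = 1 := by
    have h1 : n ≠ 0 := by omega
    have h2 : n - 1 < n := by omega
    simp only [hb_def, if_neg h1, dif_pos h2]
    exact ha_eq1 _ (by simp; omega)
  have hb_succ : ∀ j : Fin n, b ((j : ℕ) + 1) = a j := by
    intro j
    have h2 : (j : ℕ) + 1 - 1 < n := by have := j.isLt; omega
    simp only [hb_def, if_neg (Nat.succ_ne_zero _), dif_pos h2, Nat.add_sub_cancel, Fin.eta]
    exact dif_pos j.isLt
  have hb_mono : ∀ {p q : ℕ}, p ≤ q → q ≤ n → b p ≤ b q := by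
    intro p q hpq hqn
    rcases Nat.eq_zero_or_pos p with hp | hp
    · subst hp
      rw [hb0]
      simp only [hb_def]
      split_ifs
      · exact le_rfl
      · exact (ha_mem _).1.le
      · exact zero_le_one
    · have hq : 0 < q := lt_of_lt_of_le hp hpq
      have hp1 : p - 1 < n := by omega
      have hq1 : q - 1 < n := by omega
      simp only [hb_def, if_neg (by omega : p ≠ 0), if_neg (by omega : q ≠ 0),
        dif_pos hp1, dif_pos hq1]
      exact ha_mono (show ((p:ℕ) - 1 : ℕ) ≤ q - 1 by omega)
  have hspace : ∀ j : Fin n, spacings u j = b ((j : ℕ) + 1) - b (j : ℕ) := by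
    intro j
    rw [spacings, hb_succ]
    congr 1
    by_cases h : 0 < (j : ℕ)
    · rw [dif_pos h]
      have hne : (j : ℕ) ≠ 0 := by omega
      have h2 : (j : ℕ) - 1 < n := by have := j.isLt; omega
      simp only [hb_def, if_neg hne, dif_pos h2]
      rfl
    · rw [dif_neg h]
      have : (j : ℕ) = 0 := by omega
      rw [this, hb0]
  have hspace_nonneg : ∀ j : Fin n, 0 ≤ spacings u j := by
    intro j
    rw [hspace j]
    have := hb_mono (Nat.le_succ (j : ℕ)) j.isLt
    linarith
  -- the sorted full vector t
  set t : Fin n → ℝ := fun j => if h : (j : ℕ) < n - 1 then g (sortedVec u ⟨(j:ℕ), h⟩) else M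
    with ht_def
  have hsorted_mem : ∀ i : Fin (n-1), sortedVec u i ∈ Ioc (0:ℝ) 1 := fun i => hu _
  have ht_mono : Monotone t := by
    intro j j' hjj
    have hv : (j : ℕ) ≤ (j' : ℕ) := hjj
    by_cases h2 : (j' : ℕ) < n - 1
    · have h1 : (j : ℕ) < n - 1 := by omega
      rw [ht_def]
      simp only [dif_pos h1, dif_pos h2]
      exact hg_mono (hsorted_mem _) (hsorted_mem _)
        (Tuple.monotone_sort u (show ((⟨(j:ℕ), h1⟩ : Fin (n-1))) ≤ ⟨(j':ℕ), h2⟩ from hv))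
    · rw [ht_def]
      simp only [dif_neg h2]
      by_cases h1 : (j : ℕ) < n - 1
      · rw [dif_pos h1]; exact hgM _ (hsorted_mem _)
      · rw [dif_neg h1]
  have hta : ∀ j : Fin n, g (a j) ≤ t j := by
    intro j
    by_cases h : (j : ℕ) + 1 < n
    · have h1 : (j : ℕ) < n - 1 := by omega
      rw [ha_eq2 j h, ht_def]
      simp only [dif_pos h1]
      exact le_rfl
    · have h1 : ¬ (j : ℕ) < n - 1 := by have := j.isLt; omega
      rw [ha_eq1 j h, ht_def]
      simp only [dif_neg h1]
      exact hgM 1 ⟨zero_lt_one, le_rfl⟩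
  -- Step 1 : the integral bound
  have step1 : (∫ x in Set.Icc (0:ℝ) 1, g x) ≤ ∑ j : Fin n, spacings u j * g (a j) := by
    have hIoc : (∫ x in Set.Icc (0:ℝ) 1, g x) = ∫ x in Set.Ioc (0:ℝ) 1, g x :=
      integral_Icc_eq_integral_Ioc
    have hpieces : ∀ j : Fin n, Ioc (b (j:ℕ)) (b ((j:ℕ)+1)) ⊆ Ioc (0:ℝ) 1 := by
      intro j
      apply Ioc_subset_Ioc
      · rw [← hb0]; exact hb_mono (Nat.zero_le _) (le_of_lt j.isLt)
      · rw [← hbn]; exact hb_mono j.isLt le_rfl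
    have hcover : Ioc (0:ℝ) 1 = ⋃ j : Fin n, Ioc (b (j:ℕ)) (b ((j:ℕ)+1)) := by
      apply Subset.antisymm
      · have := Ioc_subset_iUnion_chain b n
        rw [hb0, hbn] at this
        exact this
      · exact iUnion_subset hpieces
    have hdisj : Pairwise (Function.onFun Disjoint fun j : Fin n => Ioc (b (j:ℕ)) (b ((j:ℕ)+1))) := by
      intro i j hij
      have key : ∀ p q : Fin n, (p : ℕ) < (q : ℕ) →
          Disjoint (Ioc (b (p:ℕ)) (b ((p:ℕ)+1))) (Ioc (b (q:ℕ)) (b ((q:ℕ)+1))) := by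
        intro p q hpq
        apply Set.disjoint_left.mpr
        rintro x ⟨_, hx2⟩ ⟨hx3, _⟩
        have : b ((p:ℕ)+1) ≤ b (q:ℕ) := hb_mono (by omega) (le_of_lt q.isLt)
        linarith
      rcases lt_or_gt_of_ne (fun h => hij (Fin.ext h) : (i:ℕ) ≠ (j:ℕ)) with h | h
      · exact key i j h
      · exact (key j i h).symm
    have hint : ∀ j : Fin n, IntegrableOn g (Ioc (b (j:ℕ)) (b ((j:ℕ)+1))) volume :=
      fun j => hg_int.mono_set ((hpieces j).trans Ioc_subset_Icc_self)
    rw [hIoc, hcover, integral_iUnion_fintype (fun _ => measurableSet_Ioc) hdisj hint]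
    apply Finset.sum_le_sum
    intro j _
    have hbj : b (j:ℕ) ≤ b ((j:ℕ)+1) := hb_mono (Nat.le_succ _) j.isLt
    calc ∫ x in Ioc (b (j:ℕ)) (b ((j:ℕ)+1)), g x
        ≤ ∫ _ in Ioc (b (j:ℕ)) (b ((j:ℕ)+1)), g (a j) := by
          apply setIntegral_mono_on (hint j)
            ((integrableOn_const_iff).mpr (Or.inr measure_Ioc_lt_top)) measurableSet_Ioc
          intro x hx
          have hx01 : x ∈ Ioc (0:ℝ) 1 := hpieces j hx
          have hxa : x ≤ a j := by rw [← hb_succ j]; exact hx.2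
          exact hg_mono hx01 (ha_mem j) hxa
      _ = spacings u j * g (a j) := by
          rw [setIntegral_const, measureReal_def, Real.volume_Ioc, ENNReal.toReal_ofReal (by linarith),
            smul_eq_mul, hspace j]
  -- Step 2 : replace g (a j) by t j
  have step2 : ∑ j : Fin n, spacings u j * g (a j) ≤ ∑ j : Fin n, spacings u j * t j :=
    Finset.sum_le_sum fun j _ => mul_le_mul_of_nonneg_left (hta j) (hspace_nonneg j)
  -- Step 3 : Abel summation, remove the cone part
  have step3 : ∑ j : Fin n, spacings u j * t j ≤ ∑ j : Fin n, μA j * t j := by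
    have hsplit : ∀ j : Fin n, spacings u j = μA j + k j := by
      intro j; rw [← hsum]; rfl
    have hgoal : ∑ j : Fin n, k j * t j ≤ 0 := by
      set k' : ℕ → ℝ := fun m => if h : m < n then k ⟨m, h⟩ else 0 with hk'_def
      set t' : ℕ → ℝ := fun m => if h : m < n then t ⟨m, h⟩ else 0 with ht'_def
      have hconv : ∑ j : Fin n, k j * t j = ∑ m ∈ Finset.range n, t' m • k' m := by
        have hstep : ∀ j : Fin n, k j * t j = (fun m => (if h : m < n then k ⟨m, h⟩ else 0) *
            (if h : m < n then t ⟨m, h⟩ else 0)) (j : ℕ) := by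
          intro j
          simp only [dif_pos j.isLt, Fin.eta]
        rw [Finset.sum_congr rfl (fun j _ => hstep j),
          Fin.sum_univ_eq_sum_range (fun m => (if h : m < n then k ⟨m, h⟩ else 0) *
            (if h : m < n then t ⟨m, h⟩ else 0)) n]
        apply Finset.sum_congr rfl
        intro m hm
        have hmn : m < n := Finset.mem_range.mp hm
        simp only [hk'_def, ht'_def, dif_pos hmn, smul_eq_mul]
        ring

      have hG : ∀ m : ℕ, m ≤ n → ∑ i ∈ Finset.range m, k' i =
          ∑ i ∈ Finset.univ.filter (fun i : Fin n => (i : ℕ) < m), k i := by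
        intro m hm
        rw [filter_sum_eq k hm]
      have hGn : ∑ i ∈ Finset.range n, k' i = 0 := by
        rw [hG n le_rfl]
        have : Finset.univ.filter (fun i : Fin n => (i : ℕ) < n) = Finset.univ := by
          apply Finset.filter_true_of_mem
          intro i _
          exact i.isLt
        rw [this]
        exact hk.2
      rw [hconv, Finset.sum_range_by_parts t' k' n, hGn, smul_zero, zero_sub, neg_nonpos]
      apply Finset.sum_nonneg
      intro i hi
      have hi' : i < n - 1 := Finset.mem_range.mp hi
      have h1 : i < n := by omega
      have h2 : i + 1 < n := by omega
      have hS : 0 ≤ ∑ j ∈ Finset.range (i+1), k' j := by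
        rw [hG (i+1) (by omega)]
        exact hk.1 (i+1) h2
      have htt : t' i ≤ t' (i+1) := by
        simp only [ht'_def, dif_pos h1, dif_pos h2]
        exact ht_mono (show (⟨i, h1⟩ : Fin n) ≤ ⟨i+1, h2⟩ from by simp [Fin.le_def])
      rw [smul_eq_mul]
      exact mul_nonneg (by linarith) hS
    calc ∑ j : Fin n, spacings u j * t j = ∑ j : Fin n, μA j * t j + ∑ j : Fin n, k j * t j := by
          rw [← Finset.sum_add_distrib]
          apply Finset.sum_congr rfl
          intro j _
          rw [hsplit j]; ring
      _ ≤ ∑ j : Fin n, μA j * t j := by linarith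
  -- Step 4 : permuting into the supremum
  haveI : Nonempty (Fin n) := ⟨⟨0, hn⟩⟩
  set w : Fin n → ℝ := fvv M (fun j => g (u j)) with hw_def
  have step4 : ∑ j : Fin n, μA j * t j ≤ sSup ((fun μ => ∑ i, μ i * w i) '' A) := by
    set τ : Equiv.Perm (Fin (n-1)) := Tuple.sort u with hτ_def
    have hlt : ∀ (i : Fin (n-1)), (i : ℕ) < n := fun i => lt_of_lt_of_le i.isLt (Nat.sub_le n 1)
    set σf : Fin n → Fin n := fun i =>
      if h : (i : ℕ) < n - 1 then ⟨(τ ⟨(i:ℕ), h⟩ : Fin (n-1)), hlt _⟩ else i with hσf_def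
    set σg : Fin n → Fin n := fun i =>
      if h : (i : ℕ) < n - 1 then ⟨(τ.symm ⟨(i:ℕ), h⟩ : Fin (n-1)), hlt _⟩ else i with hσg_def
    have hlinv : Function.LeftInverse σg σf := by
      intro i
      by_cases h : (i : ℕ) < n - 1
      · have h2 : ((⟨(τ ⟨(i:ℕ), h⟩ : Fin (n-1)), hlt _⟩ : Fin n) : ℕ) < n - 1 :=
          (τ ⟨(i:ℕ), h⟩).isLt
        simp only [hσf_def, hσg_def, dif_pos h, dif_pos h2]
        apply Fin.ext
        simp only []
        have : (⟨((τ ⟨(i:ℕ), h⟩ : Fin (n-1)) : ℕ), h2⟩ : Fin (n-1)) = τ ⟨(i:ℕ), h⟩ :=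
          Fin.ext rfl
        rw [this, Equiv.symm_apply_apply]
      · simp only [hσf_def, hσg_def, dif_neg h]
    have hrinv : Function.RightInverse σg σf := by
      intro i
      by_cases h : (i : ℕ) < n - 1
      · have h2 : ((⟨(τ.symm ⟨(i:ℕ), h⟩ : Fin (n-1)), hlt _⟩ : Fin n) : ℕ) < n - 1 :=
          (τ.symm ⟨(i:ℕ), h⟩).isLt
        simp only [hσf_def, hσg_def, dif_pos h, dif_pos h2]
        apply Fin.ext
        simp only []
        have : (⟨((τ.symm ⟨(i:ℕ), h⟩ : Fin (n-1)) : ℕ), h2⟩ : Fin (n-1)) = τ.symm ⟨(i:ℕ), h⟩ :=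
          Fin.ext rfl
        rw [this, Equiv.apply_symm_apply]
      · simp only [hσf_def, hσg_def, dif_neg h]
    set σ : Equiv.Perm (Fin n) := ⟨σf, σg, hlinv, hrinv⟩ with hσ_def
    have hw : ∀ j : Fin n, w (σ j) = t j := by
      intro j
      by_cases h : (j : ℕ) < n - 1
      · have hσj : σ j = ⟨(τ ⟨(j:ℕ), h⟩ : Fin (n-1)), hlt _⟩ := by
          simp only [hσ_def, Equiv.coe_fn_mk, hσf_def, dif_pos h]
        have h2 : ((⟨(τ ⟨(j:ℕ), h⟩ : Fin (n-1)), hlt _⟩ : Fin n) : ℕ) < n - 1 :=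
          (τ ⟨(j:ℕ), h⟩).isLt
        rw [hσj]
        simp only [hw_def, fvv, ht_def, dif_pos h2, dif_pos h]
        rfl
      · have hσj : σ j = j := by
          simp only [hσ_def, Equiv.coe_fn_mk, hσf_def, dif_neg h]
        rw [hσj]
        simp only [hw_def, fvv, ht_def, dif_neg h]
    have hμσ : (fun i => μA (σ.symm i)) ∈ A := hAperm σ.symm μA hμA
    have hsum_eq : ∑ i, μA (σ.symm i) * w i = ∑ j : Fin n, μA j * t j := by
      rw [← Equiv.sum_comp σ (fun i => μA (σ.symm i) * w i)]
      apply Finset.sum_congr rfl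
      intro j _
      rw [Equiv.symm_apply_apply, hw j]
    have hbdd : BddAbove ((fun μ => ∑ i, μ i * w i) '' A) := by
      refine ⟨Finset.univ.sup' Finset.univ_nonempty w, ?_⟩
      rintro y ⟨μ, hμ, rfl⟩
      calc ∑ i, μ i * w i ≤ ∑ i, μ i * Finset.univ.sup' Finset.univ_nonempty w := by
            apply Finset.sum_le_sum
            intro i _
            exact mul_le_mul_of_nonneg_left (Finset.le_sup' w (Finset.mem_univ i))
              ((hAsub hμ).1 i)
        _ = 1 * Finset.univ.sup' Finset.univ_nonempty w := by
            rw [← Finset.sum_mul, (hAsub hμ).2]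
        _ = _ := one_mul _
    calc ∑ j : Fin n, μA j * t j = ∑ i, μA (σ.symm i) * w i := hsum_eq.symm
      _ ≤ sSup ((fun μ => ∑ i, μ i * w i) '' A) :=
          le_csSup hbdd (mem_image_of_mem _ hμσ)
  linarith [step1, step2, step3, step4]


/-- main theorem: for measurable, permutation-invariant `A ⊆ Δ^n`, an integrable
`Z` with finite essential supremum `M`, iid copies `Z_1, …, Z_{n-1}` of `Z` with `Z_n := M`,
and `ν` the uniform spacings vector,
`P[sup_{μ ∈ A} ∑ μ_i Z_i ≥ E[Z]] ≥ P[ν ∈ A + K^n]`. -/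
theorem prob_sup_ge_mean_ge_prob_spacings
    {Ω : Type*} [MeasurableSpace Ω] (P : Measure Ω) [IsProbabilityMeasure P]
    (n : ℕ) (hn : 1 ≤ n)
    (A : Set (Fin n → ℝ)) (hAsub : A ⊆ stdSimplex ℝ (Fin n)) (hAmeas : MeasurableSet A)
    (hAperm : ∀ π : Equiv.Perm (Fin n), ∀ μ ∈ A, (fun i => μ (π i)) ∈ A)
    (Z : Ω → ℝ) (hZmeas : Measurable Z) (hZint : Integrable Z P)
    (M : ℝ) (hM_ub : ∀ᵐ ω ∂P, Z ω ≤ M) (hM_least : ∀ c : ℝ, (∀ᵐ ω ∂P, Z ω ≤ c) → M ≤ c)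
    (Zs : Fin (n - 1) → Ω → ℝ) (hZs_meas : ∀ i, Measurable (Zs i))
    (hZs_indep : iIndepFun Zs P)
    (hZs_law : ∀ i, Measure.map (Zs i) P = Measure.map Z P)
    (Us : Fin (n - 1) → Ω → ℝ) (hUs_meas : ∀ i, Measurable (Us i))
    (hUs_indep : iIndepFun Us P)
    (hUs_law : ∀ i, Measure.map (Us i) P = volume.restrict (Set.Icc (0 : ℝ) 1)) :
    P {ω | spacings (fun i => Us i ω) ∈ A + majorCone n} ≤
      P {ω | (∫ x, Z x ∂P) ≤
        sSup ((fun μ => ∑ i, μ i * fullVec Zs M i ω) '' A)} := by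
  classical
  haveI : Nonempty (Fin n) := ⟨⟨0, hn⟩⟩
  set ρ : Measure ℝ := Measure.map Z P with hρ_def
  haveI : IsProbabilityMeasure ρ := Measure.isProbabilityMeasure_map hZmeas.aemeasurable
  set unif : Measure ℝ := volume.restrict (Set.Icc (0:ℝ) 1) with hunif_def
  haveI hunif_prob : IsProbabilityMeasure unif :=
    ⟨by rw [hunif_def, Measure.restrict_apply_univ, Real.volume_Icc]; norm_num⟩
  -- the essential supremum is reached by the cdf
  have hρM : ρ (Set.Iic M) = 1 := by
    rw [hρ_def, Measure.map_apply hZmeas measurableSet_Iic]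
    have hs : MeasurableSet (Z ⁻¹' Set.Iic M) := hZmeas measurableSet_Iic
    have hc : P ((Z ⁻¹' Set.Iic M)ᶜ) = 0 := by
      have h := ae_iff.mp hM_ub
      have heq : (Z ⁻¹' Set.Iic M)ᶜ = {ω | ¬ Z ω ≤ M} := by ext ω; simp
      rw [heq]
      exact h
    have := measure_add_measure_compl (μ := P) hs
    rw [hc, add_zero, measure_univ] at this
    exact this
  have hFM : cdf ρ M = 1 := by
    have h := ofReal_cdf (μ := ρ) M
    rw [hρM] at h
    exact (ENNReal.ofReal_eq_one).mp h
  set g : ℝ → ℝ := qf ρ with hg_def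
  have hg_meas : Measurable g := qf_measurable ρ hFM
  have hg_map : Measure.map g unif = ρ := qf_map ρ hFM
  have hg_mono : MonotoneOn g (Set.Ioc 0 1) := qf_monotoneOn ρ hFM
  have hg_leM : ∀ x ∈ Set.Ioc (0:ℝ) 1, g x ≤ M := fun x hx => qf_le_M ρ hFM hx
  -- integrability and the mean identity
  have hid_int : Integrable id ρ := by
    rw [hρ_def]
    exact (integrable_map_measure aestronglyMeasurable_id hZmeas.aemeasurable).mpr hZint
  have hg_int : Integrable g unif := by
    have h1 : Integrable id (Measure.map g unif) := by rw [hg_map]; exact hid_int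
    exact (integrable_map_measure aestronglyMeasurable_id hg_meas.aemeasurable).mp h1
  have hEZ : (∫ x, Z x ∂P) = ∫ x in Set.Icc (0:ℝ) 1, g x := by
    have h1 : ∫ x, id x ∂ρ = ∫ ω, Z ω ∂P := by
      rw [hρ_def, integral_map hZmeas.aemeasurable aestronglyMeasurable_id]
      rfl
    have h2 : ∫ x, id x ∂ρ = ∫ u, g u ∂unif := by
      rw [← hg_map, integral_map hg_meas.aemeasurable aestronglyMeasurable_id]
      rfl
    rw [← h1, h2, hunif_def]
  -- laws of the random vectors
  set Φ : Ω → (Fin (n-1) → ℝ) := fun ω i => Us i ω with hΦ_def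
  have hΦmeas : Measurable Φ := measurable_pi_lambda _ hUs_meas
  have hΦ_law : Measure.map Φ P = Measure.pi (fun _ : Fin (n-1) => unif) := by
    refine (Measure.pi_eq fun s hs => ?_).symm
    rw [Measure.map_apply hΦmeas (MeasurableSet.univ_pi hs)]
    have hpre : Φ ⁻¹' (Set.pi Set.univ s) = ⋂ i ∈ (Finset.univ : Finset (Fin (n-1))),
        Us i ⁻¹' s i := by
      ext ω
      simp [hΦ_def, Set.mem_pi]
    rw [hpre, hUs_indep.measure_inter_preimage_eq_mul Finset.univ (fun i _ => hs i)]
    apply Finset.prod_congr rfl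
    intro i _
    rw [← hUs_law i, Measure.map_apply (hUs_meas i) (hs i)]
  set Ψ : Ω → (Fin (n-1) → ℝ) := fun ω i => Zs i ω with hΨ_def
  have hΨmeas : Measurable Ψ := measurable_pi_lambda _ hZs_meas
  have hΨ_law : Measure.map Ψ P = Measure.pi (fun _ : Fin (n-1) => ρ) := by
    refine (Measure.pi_eq fun s hs => ?_).symm
    rw [Measure.map_apply hΨmeas (MeasurableSet.univ_pi hs)]
    have hpre : Ψ ⁻¹' (Set.pi Set.univ s) = ⋂ i ∈ (Finset.univ : Finset (Fin (n-1))),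
        Zs i ⁻¹' s i := by
      ext ω
      simp [hΨ_def, Set.mem_pi]
    rw [hpre, hZs_indep.measure_inter_preimage_eq_mul Finset.univ (fun i _ => hs i)]
    apply Finset.prod_congr rfl
    intro i _
    rw [← hZs_law i, Measure.map_apply (hZs_meas i) (hs i)]
  set G : (Fin (n-1) → ℝ) → (Fin (n-1) → ℝ) := fun v i => g (v i) with hG_def
  have hGmeas : Measurable G :=
    measurable_pi_lambda _ (fun i => hg_meas.comp (measurable_pi_apply i))
  have hG_law : Measure.map G (Measure.pi fun _ : Fin (n-1) => unif)
      = Measure.pi (fun _ : Fin (n-1) => ρ) :=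
    (measurePreserving_pi _ _ (fun _ => ⟨hg_meas, hg_map⟩)).map_eq
  have hGΦmeas : Measurable (G ∘ Φ) := hGmeas.comp hΦmeas
  have hTΦ_law : Measure.map (G ∘ Φ) P = Measure.map Ψ P := by
    rw [← Measure.map_map hGmeas hΦmeas, hΦ_law, hG_law, hΨ_law]
  -- the target event set
  set gfun : (Fin (n-1) → ℝ) → ℝ :=
    fun z => sSup ((fun μ => ∑ i, μ i * fvv M z i) '' A) with hgfun_def
  have hfvv_cont : ∀ i : Fin n, Continuous (fun z : Fin (n-1) → ℝ => fvv M z i) := by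
    intro i
    by_cases h : (i : ℕ) < n - 1
    · simp only [fvv, dif_pos h]; exact continuous_apply _
    · simp only [fvv, dif_neg h]; exact continuous_const
  have hgfun_meas : Measurable gfun := by
    rcases A.eq_empty_or_nonempty with hA | hA
    · have : gfun = fun _ => sSup (∅ : Set ℝ) := by
        funext z
        show sSup ((fun μ => ∑ i, μ i * fvv M z i) '' A) = sSup ∅
        rw [hA, Set.image_empty]
      rw [this]
      exact measurable_const
    · haveI : Nonempty A := hA.to_subtype
      have heq : gfun = fun z => ⨆ μ : A, ∑ i, (μ : Fin n → ℝ) i * fvv M z i := by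
        funext z
        show sSup ((fun μ => ∑ i, μ i * fvv M z i) '' A) = _
        rw [Set.image_eq_range]
        rfl
      rw [heq]
      have hbdd : ∀ z : Fin (n-1) → ℝ,
          BddAbove (Set.range fun μ : A => ∑ i, (μ : Fin n → ℝ) i * fvv M z i) := by
        intro z
        refine ⟨Finset.univ.sup' Finset.univ_nonempty (fvv M z), ?_⟩
        rintro y ⟨μ, rfl⟩
        calc ∑ i, (μ : Fin n → ℝ) i * fvv M z i
            ≤ ∑ i, (μ : Fin n → ℝ) i * Finset.univ.sup' Finset.univ_nonempty (fvv M z) := by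
              apply Finset.sum_le_sum
              intro i _
              exact mul_le_mul_of_nonneg_left (Finset.le_sup' _ (Finset.mem_univ i))
                ((hAsub μ.2).1 i)
          _ = 1 * Finset.univ.sup' Finset.univ_nonempty (fvv M z) := by
              rw [← Finset.sum_mul, (hAsub μ.2).2]
          _ = _ := one_mul _
      have hlsc : LowerSemicontinuous
          (fun z => ⨆ μ : A, ∑ i, (μ : Fin n → ℝ) i * fvv M z i) := by
        apply lowerSemicontinuous_ciSup hbdd
        intro μ
        exact (continuous_finset_sum _ fun i _ =>
          continuous_const.mul (hfvv_cont i)).lowerSemicontinuous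
      exact hlsc.measurable
  set B : Set (Fin (n-1) → ℝ) := {z | (∫ x, Z x ∂P) ≤ gfun z} with hB_def
  have hBmeas : MeasurableSet B := measurableSet_le measurable_const hgfun_meas
  -- almost surely the uniforms are in (0,1]
  have hae : ∀ᵐ ω ∂P, ∀ i, Us i ω ∈ Set.Ioc (0:ℝ) 1 := by
    rw [ae_all_iff]
    intro i
    have h0 : P (Us i ⁻¹' (Set.Ioc (0:ℝ) 1)ᶜ) = 0 := by
      rw [← Measure.map_apply (hUs_meas i) measurableSet_Ioc.compl, hUs_law i, hunif_def,
        Measure.restrict_apply measurableSet_Ioc.compl]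
      have hset : (Set.Ioc (0:ℝ) 1)ᶜ ∩ Set.Icc 0 1 = {0} := by
        rw [← Set.diff_eq_compl_inter]
        ext x
        simp only [Set.mem_diff, Set.mem_Icc, Set.mem_Ioc, Set.mem_singleton_iff]
        constructor
        · rintro ⟨⟨h0, h1⟩, h⟩
          by_contra hx
          exact h ⟨lt_of_le_of_ne h0 (Ne.symm hx), h1⟩
        · rintro rfl
          norm_num
      rw [hset]
      exact Real.volume_singleton
    rw [ae_iff]
    exact h0
  -- conclusion
  have key : P {ω | spacings (fun i => Us i ω) ∈ A + majorCone n} ≤ P ((G ∘ Φ) ⁻¹' B) := by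
    apply measure_mono_ae
    filter_upwards [hae] with ω hω hmem
    show (∫ x, Z x ∂P) ≤ gfun (G (Φ ω))
    rw [hEZ]
    exact det_key hn A hAsub hAperm g M hg_mono hg_leM hg_int (fun i => Us i ω) hω hmem
  calc P {ω | spacings (fun i => Us i ω) ∈ A + majorCone n}
      ≤ P ((G ∘ Φ) ⁻¹' B) := key
    _ = Measure.map (G ∘ Φ) P B := (Measure.map_apply hGΦmeas hBmeas).symm
    _ = Measure.map Ψ P B := by rw [hTΦ_law]
    _ = P (Ψ ⁻¹' B) := Measure.map_apply hΨmeas hBmeas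
    _ = P {ω | (∫ x, Z x ∂P) ≤ sSup ((fun μ => ∑ i, μ i * fullVec Zs M i ω) '' A)} := rfl
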